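/- arXiv:1503.00496 — 3 statements merged into one kernel-verified Lean document; each statement's English description precedes it below -/
import Mathlib

section
/- There exists a constant c depending only on N such that: if a sequence (γ_k) in 𝔖¹(𝓗^N) converges geometrically to γ ∈ 𝔖¹(𝓕^{≤N}(𝓗)) and ‖γ_k‖_{𝔖¹(𝓗^N)} < ε for all k, then ‖γ‖_{𝔖¹(𝓕^{≤N})} ≤ c ε. -/
open scoped InnerProductSpace
open Filter

noncomputable section

universe u

section Defs

variable {E : Type u} [NormedAddCommGroup E] [InnerProductSpace ℂ E] [CompleteSpace E]

/-- `A` has trace `c`. -/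
def HasTr (A : E →L[ℂ] E) (c : ℂ) : Prop :=
  ∀ (ι : Type u) (e : HilbertBasis ι ℂ E), HasSum (fun i => ⟪e i, A (e i)⟫_ℂ) c

/-- The trace norm of `A` is at most `C`. -/
def TraceNormLE (A : E →L[ℂ] E) (C : ℝ) : Prop :=
  ∀ (n : ℕ) (e f : Fin n → E), Orthonormal ℂ e → Orthonormal ℂ f →
    ∑ i, ‖(⟪e i, A (f i)⟫_ℂ)‖ ≤ C

/-- Weak-* convergence in the trace class. -/
def WeakStarTo (A : ℕ → (E →L[ℂ] E)) (L : E →L[ℂ] E) : Prop :=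
  ∀ (T : E →L[ℂ] E), IsCompactOperator (⇑T) →
    ∀ (c : ℕ → ℂ) (cL : ℂ), (∀ k, HasTr (T.comp (A k)) (c k)) → HasTr (T.comp L) cL →
      Tendsto c atTop (nhds cL)

end Defs

/-- The `n`-particle reduced density matrix of a block operator on `𝓕^{≤N}`. -/
def rdm {Hn : ℕ → Type u} [∀ n, NormedAddCommGroup (Hn n)]
    [∀ n, InnerProductSpace ℂ (Hn n)] [∀ n, CompleteSpace (Hn n)]
    (ptr : ∀ m n : ℕ, (Hn m →L[ℂ] Hn m) → (Hn n →L[ℂ] Hn n)) (N : ℕ)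
    (G : ∀ n, Hn n →L[ℂ] Hn n) (n : ℕ) : Hn n →L[ℂ] Hn n :=
  ∑ m ∈ Finset.Icc n N, (m.choose n : ℂ) • ptr m n (G m)


set_option maxHeartbeats 1000000

section Aux

variable {E : Type u} [NormedAddCommGroup E] [InnerProductSpace ℂ E] [CompleteSpace E]


variable {E : Type u} [NormedAddCommGroup E] [InnerProductSpace ℂ E] [CompleteSpace E]

lemma tnle_nonneg {A : E →L[ℂ] E} {C : ℝ} (h : TraceNormLE A C) : 0 ≤ C := by
  have h0 : Orthonormal ℂ (fun i : Fin 0 => (0 : E)) :=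
    orthonormal_iff_ite.2 fun i => i.elim0
  simpa using h 0 _ _ h0 h0

lemma tnle_mono {A : E →L[ℂ] E} {C C' : ℝ} (h : TraceNormLE A C) (hC : C ≤ C') :
    TraceNormLE A C' := fun p e f he hf => (h p e f he hf).trans hC

lemma tnle_zero : TraceNormLE (0 : E →L[ℂ] E) 0 := by
  intro p e f _ _
  simp

lemma tnle_fintype {A : E →L[ℂ] E} {C : ℝ} (h : TraceNormLE A C) {ι : Type*} [Fintype ι]
    (e f : ι → E) (he : Orthonormal ℂ e) (hf : Orthonormal ℂ f) :
    ∑ i, ‖(⟪e i, A (f i)⟫_ℂ)‖ ≤ C := by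
  let σ := (Fintype.equivFin ι).symm
  calc ∑ i, ‖(⟪e i, A (f i)⟫_ℂ)‖
      = ∑ j, ‖(⟪e (σ j), A (f (σ j))⟫_ℂ)‖ := (Equiv.sum_comp σ _).symm
    _ ≤ C := h (Fintype.card ι) (e ∘ σ) (f ∘ σ) (he.comp σ σ.injective)
        (hf.comp σ σ.injective)

lemma tnle_smul {A : E →L[ℂ] E} {C : ℝ} (z : ℂ) (h : TraceNormLE A C) :
    TraceNormLE (z • A) (‖z‖ * C) := by
  intro p e f he hf
  have : ∀ i, ‖(⟪e i, (z • A) (f i)⟫_ℂ)‖ = ‖z‖ * ‖(⟪e i, A (f i)⟫_ℂ)‖ := by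
    intro i
    rw [ContinuousLinearMap.smul_apply, inner_smul_right, norm_mul]
  rw [Finset.sum_congr rfl fun i _ => this i, ← Finset.mul_sum]
  exact mul_le_mul_of_nonneg_left (h p e f he hf) (norm_nonneg z)

lemma tnle_sub {A B : E →L[ℂ] E} {Ca Cb : ℝ} (hA : TraceNormLE A Ca)
    (hB : TraceNormLE B Cb) : TraceNormLE (A - B) (Ca + Cb) := by
  intro p e f he hf
  calc ∑ i, ‖(⟪e i, (A - B) (f i)⟫_ℂ)‖
      ≤ ∑ i, (‖(⟪e i, A (f i)⟫_ℂ)‖ + ‖(⟪e i, B (f i)⟫_ℂ)‖) := by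
        refine Finset.sum_le_sum fun i _ => ?_
        rw [ContinuousLinearMap.sub_apply, inner_sub_right]
        exact norm_sub_le _ _
    _ = (∑ i, ‖(⟪e i, A (f i)⟫_ℂ)‖) + ∑ i, ‖(⟪e i, B (f i)⟫_ℂ)‖ :=
        Finset.sum_add_distrib
    _ ≤ Ca + Cb := add_le_add (hA p e f he hf) (hB p e f he hf)

lemma tnle_sum {ι : Type*} (s : Finset ι) (A : ι → E →L[ℂ] E) (C : ι → ℝ)
    (h : ∀ m ∈ s, TraceNormLE (A m) (C m)) :
    TraceNormLE (∑ m ∈ s, A m) (∑ m ∈ s, C m) := by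
  intro p e f he hf
  calc ∑ i, ‖(⟪e i, (∑ m ∈ s, A m) (f i)⟫_ℂ)‖
      ≤ ∑ i, ∑ m ∈ s, ‖(⟪e i, A m (f i)⟫_ℂ)‖ := by
        refine Finset.sum_le_sum fun i _ => ?_
        rw [ContinuousLinearMap.sum_apply, inner_sum]
        exact norm_sum_le _ _
    _ = ∑ m ∈ s, ∑ i, ‖(⟪e i, A m (f i)⟫_ℂ)‖ := Finset.sum_comm
    _ ≤ ∑ m ∈ s, C m := Finset.sum_le_sum fun m hm => h m hm p e f he hf

lemma hasTr_rankOne (x y : E) (A : E →L[ℂ] E) :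
    HasTr (((innerSL ℂ x).smulRight y).comp A) ⟪x, A y⟫_ℂ := by
  intro ι b
  have h := b.hasSum_inner_mul_inner (ContinuousLinearMap.adjoint A x) y
  simp only [ContinuousLinearMap.adjoint_inner_left] at h
  simpa only [ContinuousLinearMap.comp_apply, ContinuousLinearMap.smulRight_apply,
    innerSL_apply_apply, inner_smul_right] using h

lemma isCompactOperator_rankOne (x y : E) :
    IsCompactOperator ⇑((innerSL ℂ x).smulRight y) := by
  have h1 : IsCompactOperator (fun c : ℂ => c • y) := by
    refine ⟨(fun c : ℂ => c • y) '' Metric.closedBall 0 1,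
      ((isCompact_closedBall (0:ℂ) 1).image (by fun_prop)), ?_⟩
    exact Filter.mem_of_superset (Metric.closedBall_mem_nhds 0 one_pos)
      fun c hc => ⟨c, hc, rfl⟩
  have h2 := h1.comp_clm (innerSL ℂ x)
  exact h2

end Aux

section Ptr


variable {H : Type u} [NormedAddCommGroup H] [InnerProductSpace ℂ H] [CompleteSpace H]
  {Hn : ℕ → Type u} [∀ n, NormedAddCommGroup (Hn n)] [∀ n, InnerProductSpace ℂ (Hn n)]
  [∀ n, CompleteSpace (Hn n)]

lemma orthonormal_tp (tp : ∀ n, Hn n → H → Hn (n + 1))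
    (htp : ∀ n (x y : Hn n) (f g : H), ⟪tp n x f, tp n y g⟫_ℂ = ⟪x, y⟫_ℂ * ⟪f, g⟫_ℂ)
    (n : ℕ) {ι₁ ι₂ : Type*} {e : ι₁ → Hn n} {g : ι₂ → H}
    (he : Orthonormal ℂ e) (hg : Orthonormal ℂ g) :
    Orthonormal ℂ (fun q : ι₁ × ι₂ => tp n (e q.1) (g q.2)) := by
  classical
  rw [orthonormal_iff_ite] at he hg ⊢
  intro q r
  rw [htp, he q.1 r.1, hg q.2 r.2]
  by_cases h1 : q.1 = r.1 <;> by_cases h2 : q.2 = r.2 <;>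
    simp [h1, h2, Prod.ext_iff]

lemma tnle_ptr_one (tp : ∀ n, Hn n → H → Hn (n + 1))
    (htp : ∀ n (x y : Hn n) (f g : H), ⟪tp n x f, tp n y g⟫_ℂ = ⟪x, y⟫_ℂ * ⟪f, g⟫_ℂ)
    (ptr : ∀ m n : ℕ, (Hn m →L[ℂ] Hn m) → (Hn n →L[ℂ] Hn n))
    (hps : ∀ n (G : Hn (n + 1) →L[ℂ] Hn (n + 1)) (x y : Hn n)
      (ι : Type u) (e : HilbertBasis ι ℂ H),
      HasSum (fun i => ⟪tp n x (e i), G (tp n y (e i))⟫_ℂ) ⟪x, ptr (n + 1) n G y⟫_ℂ)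
    (n : ℕ) (G : Hn (n + 1) →L[ℂ] Hn (n + 1)) {C : ℝ} (hG : TraceNormLE G C) :
    TraceNormLE (ptr (n + 1) n G) C := by
  intro p e f he hf
  obtain ⟨w, b, -⟩ := exists_hilbertBasis ℂ H
  set F : Fin p → w → ℂ := fun i' i => ⟪tp n (e i') (b i), G (tp n (f i') (b i))⟫_ℂ with hF
  have hs : ∀ i' : Fin p, HasSum (F i') ⟪e i', ptr (n + 1) n G (f i')⟫_ℂ :=
    fun i' => hps n G (e i') (f i') w b
  have hten : Tendsto (fun J : Finset w => ∑ i', ‖∑ i ∈ J, F i' i‖)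
      atTop (nhds (∑ i', ‖(⟪e i', ptr (n + 1) n G (f i')⟫_ℂ)‖)) :=
    tendsto_finset_sum _ fun i' _ =>
      Filter.Tendsto.norm (hs i' : Tendsto _ atTop (nhds _))
  refine le_of_tendsto hten (Eventually.of_forall fun J => ?_)
  calc ∑ i', ‖∑ i ∈ J, F i' i‖
      ≤ ∑ i', ∑ i ∈ J, ‖F i' i‖ := Finset.sum_le_sum fun i' _ => norm_sum_le _ _
    _ = ∑ i', ∑ i : ↥J, ‖F i' i‖ := by
        refine Finset.sum_congr rfl fun i' _ => (Finset.sum_coe_sort J _).symm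
    _ = ∑ q : Fin p × ↥J, ‖F q.1 q.2‖ := (Fintype.sum_prod_type (fun q : Fin p × ↥J => ‖F q.1 (q.2 : w)‖)).symm
    _ ≤ C := by
        refine tnle_fintype hG (fun q : Fin p × ↥J => tp n (e q.1) (b q.2))
          (fun q : Fin p × ↥J => tp n (f q.1) (b q.2)) ?_ ?_
        · exact orthonormal_tp tp htp n he
            (b.orthonormal.comp (Subtype.val : ↥J → w) Subtype.val_injective)
        · exact orthonormal_tp tp htp n hf
            (b.orthonormal.comp (Subtype.val : ↥J → w) Subtype.val_injective)

lemma tnle_ptr (tp : ∀ n, Hn n → H → Hn (n + 1))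
    (htp : ∀ n (x y : Hn n) (f g : H), ⟪tp n x f, tp n y g⟫_ℂ = ⟪x, y⟫_ℂ * ⟪f, g⟫_ℂ)
    (ptr : ∀ m n : ℕ, (Hn m →L[ℂ] Hn m) → (Hn n →L[ℂ] Hn n))
    (hrefl : ∀ n G, ptr n n G = G)
    (hps : ∀ n (G : Hn (n + 1) →L[ℂ] Hn (n + 1)) (x y : Hn n)
      (ι : Type u) (e : HilbertBasis ι ℂ H),
      HasSum (fun i => ⟪tp n x (e i), G (tp n y (e i))⟫_ℂ) ⟪x, ptr (n + 1) n G y⟫_ℂ)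
    (hcomp : ∀ m n : ℕ, n ≤ m → ∀ (G : Hn (m + 1) →L[ℂ] Hn (m + 1)),
      ptr (m + 1) n G = ptr m n (ptr (m + 1) m G)) :
    ∀ m n, n ≤ m → ∀ (G : Hn m →L[ℂ] Hn m) {C : ℝ}, TraceNormLE G C →
      TraceNormLE (ptr m n G) C := by
  intro m
  induction m with
  | zero =>
    intro n hn G C hG
    obtain rfl : n = 0 := Nat.le_zero.1 hn
    rw [hrefl]; exact hG
  | succ m IH =>
    intro n hn G C hG
    rcases eq_or_lt_of_le hn with h | h
    · cases h; rw [hrefl]; exact hG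
    · have hnm : n ≤ m := Nat.lt_succ_iff.1 h
      rw [hcomp m n hnm]
      exact IH n hnm _ (tnle_ptr_one tp htp ptr hps m G hG)

end Ptr

/-- **Trace-norm bound for geometric limits.** There is a constant `c` depending only on
`N` such that if a sequence `γ_k ∈ 𝔖¹(𝓗^N)` converges geometrically to
`γ = G_0 ⊕ ⋯ ⊕ G_N ∈ 𝔖¹(𝓕^{≤N}(𝓗))` and `‖γ_k‖_{𝔖¹} ≤ ε` for all `k`, then
`‖γ‖_{𝔖¹(𝓕^{≤N})} = ∑_n ‖G_n‖_{𝔖¹} ≤ c ε`. -/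
theorem traceNorm_of_geometric_limit (N : ℕ) :
    ∃ c : ℝ, 0 < c ∧
    ∀ (H : Type u), ∀ (_ : NormedAddCommGroup H) (_ : InnerProductSpace ℂ H)
      (_ : CompleteSpace H),
    ∀ (Hn : ℕ → Type u), ∀ (_ : ∀ n, NormedAddCommGroup (Hn n))
      (_ : ∀ n, InnerProductSpace ℂ (Hn n)) (_ : ∀ n, CompleteSpace (Hn n)),
    ∀ (tp : ∀ n, Hn n → H → Hn (n + 1)),
      (∀ n (x y : Hn n) (f g : H), ⟪tp n x f, tp n y g⟫_ℂ = ⟪x, y⟫_ℂ * ⟪f, g⟫_ℂ) →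
      (∀ n (f : H), IsLinearMap ℂ (fun x : Hn n => tp n x f)) →
      (∀ n (x : Hn n), IsLinearMap ℂ (tp n x)) →
      (∀ n, (Submodule.span ℂ
        (Set.range fun p : Hn n × H => tp n p.1 p.2)).topologicalClosure = ⊤) →
    ∀ (ptr : ∀ m n : ℕ, (Hn m →L[ℂ] Hn m) → (Hn n →L[ℂ] Hn n)),
      (∀ m n, IsLinearMap ℂ (ptr m n)) →
      (∀ n G, ptr n n G = G) →
      (∀ n (G : Hn (n + 1) →L[ℂ] Hn (n + 1)) (x y : Hn n)
        (ι : Type u) (e : HilbertBasis ι ℂ H),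
        HasSum (fun i => ⟪tp n x (e i), G (tp n y (e i))⟫_ℂ) ⟪x, ptr (n + 1) n G y⟫_ℂ) →
      (∀ m n : ℕ, n ≤ m → ∀ (G : Hn (m + 1) →L[ℂ] Hn (m + 1)),
        ptr (m + 1) n G = ptr m n (ptr (m + 1) m G)) →
    ∀ (γ : ℕ → (Hn N →L[ℂ] Hn N)) (ε : ℝ)
      (Ginf : ∀ n, Hn n →L[ℂ] Hn n),
      (∀ k, TraceNormLE (γ k) ε) →
      (∀ n, N < n → Ginf n = 0) →
      -- geometric convergence: the reduced density matrices
      -- `γ_k^{(n)} = C(N,n) Tr_{n+1,…,N} γ_k` converge weakly-* to those of `Ginf`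
      (∀ n, n ≤ N → WeakStarTo (fun k => (N.choose n : ℂ) • ptr N n (γ k))
        (rdm ptr N Ginf n)) →
      ∃ C : ℕ → ℝ, (∀ n, TraceNormLE (Ginf n) (C n)) ∧
        ∑ n ∈ Finset.range (N + 1), C n ≤ c * ε := by
  classical
  refine ⟨(N + 1) * ((4:ℝ)^N)^(N+1) + 1, by positivity, ?_⟩
  intro H _ _ _ Hn _ _ _ tp htp _ _ _ ptr _ hrefl hps hcomp γ ε Ginf hγ h0 hconv
  -- basic numeric facts
  have hε : 0 ≤ ε := tnle_nonneg (hγ 0)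
  have hK1 : (1:ℝ) ≤ (4:ℝ)^N := one_le_pow₀ (by norm_num)
  have hchN : ∀ n' : ℕ, (N.choose n' : ℝ) ≤ 2^N := by
    intro n'
    rcases le_or_gt n' N with h | h
    · have : N.choose n' ≤ 2^N := by
        calc N.choose n' ≤ ∑ m ∈ Finset.range (N+1), N.choose m :=
              Finset.single_le_sum (fun _ _ => Nat.zero_le _)
                (Finset.mem_range.2 (by omega))
          _ = 2^N := Nat.sum_range_choose N
      exact_mod_cast this
    · rw [Nat.choose_eq_zero_of_lt h]
      simp only [Nat.cast_zero]
      positivity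
  have hch : ∀ m n' : ℕ, m ≤ N → (m.choose n' : ℝ) ≤ 2^N := by
    intro m n' hm
    calc (m.choose n' : ℝ) ≤ (N.choose n' : ℝ) := by
          exact_mod_cast Nat.choose_le_choose n' hm
      _ ≤ 2^N := hchN n'
  have hN2 : ((N:ℝ) + 1) ≤ 2^N := by exact_mod_cast Nat.lt_two_pow_self (n := N)
  have h44 : (2:ℝ)^N * 2^N = 4^N := by rw [← mul_pow]; norm_num
  -- matrix elements of the reduced density matrices converge
  have hmat : ∀ n, n ≤ N → ∀ (x y : Hn n),
      Tendsto (fun k => ⟪x, ((N.choose n : ℂ) • ptr N n (γ k)) y⟫_ℂ) atTop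
        (nhds ⟪x, rdm ptr N Ginf n y⟫_ℂ) := by
    intro n hn x y
    exact hconv n hn ((innerSL ℂ x).smulRight y) (isCompactOperator_rankOne x y) _ _
      (fun k => hasTr_rankOne x y _) (hasTr_rankOne x y _)
  -- trace norm bound for the reduced density matrices of the limit
  have hrdm : ∀ n, n ≤ N → TraceNormLE (rdm ptr N Ginf n) ((N.choose n : ℝ) * ε) := by
    intro n hn p e f he hf
    have hlim : Tendsto (fun k => ∑ i, ‖(⟪e i, ((N.choose n : ℂ) • ptr N n (γ k)) (f i)⟫_ℂ)‖)
        atTop (nhds (∑ i, ‖(⟪e i, rdm ptr N Ginf n (f i)⟫_ℂ)‖)) :=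
      tendsto_finset_sum _ fun i _ => (hmat n hn (e i) (f i)).norm
    refine le_of_tendsto hlim (Eventually.of_forall fun k => ?_)
    have h1 : TraceNormLE ((N.choose n : ℂ) • ptr N n (γ k)) (‖(N.choose n : ℂ)‖ * ε) :=
      tnle_smul _ (tnle_ptr tp htp ptr hrefl hps hcomp N n hn (γ k) (hγ k))
    have h2 := h1 p e f he hf
    rwa [Complex.norm_natCast] at h2
  -- the key downward induction
  have key : ∀ d n, n + d = N → TraceNormLE (Ginf n) (((4:ℝ)^N)^(d+1) * ε) := by
    intro d
    induction d using Nat.strong_induction_on with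
    | _ d IH =>
      intro n hn
      have hnN : n ≤ N := by omega
      have hsplit : rdm ptr N Ginf n
          = Ginf n + ∑ m ∈ Finset.Ioc n N, (m.choose n : ℂ) • ptr m n (Ginf m) := by
        rw [rdm, Finset.Icc_eq_cons_Ioc hnN, Finset.sum_cons, Nat.choose_self,
          Nat.cast_one, one_smul, hrefl]
      have hG : Ginf n = rdm ptr N Ginf n
          - ∑ m ∈ Finset.Ioc n N, (m.choose n : ℂ) • ptr m n (Ginf m) :=
        eq_sub_of_add_eq hsplit.symm
      rw [hG]
      have hsum : TraceNormLE (∑ m ∈ Finset.Ioc n N, (m.choose n : ℂ) • ptr m n (Ginf m))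
          (∑ m ∈ Finset.Ioc n N, (m.choose n : ℝ) * (((4:ℝ)^N)^(N - m + 1) * ε)) := by
        refine tnle_sum _ _ _ fun m hm => ?_
        have hm' := Finset.mem_Ioc.1 hm
        have h1 : TraceNormLE (Ginf m) (((4:ℝ)^N)^((N - m) + 1) * ε) :=
          IH (N - m) (by omega) m (by omega)
        have h2 := tnle_smul (m.choose n : ℂ)
          (tnle_ptr tp htp ptr hrefl hps hcomp m n (le_of_lt hm'.1) _ h1)
        rwa [Complex.norm_natCast] at h2
      refine tnle_mono (tnle_sub (hrdm n hnN) hsum) ?_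
      -- numeric estimate
      have hd : d ≤ N := by omega
      have hKd1 : (1:ℝ) ≤ ((4:ℝ)^N)^d := one_le_pow₀ hK1
      have e1 : (N.choose n : ℝ) * ε ≤ 2^N * (((4:ℝ)^N)^d * ε) :=
        mul_le_mul (hchN n) (le_mul_of_one_le_left hε hKd1) hε (by positivity)
      have e2 : ∑ m ∈ Finset.Ioc n N, (m.choose n : ℝ) * (((4:ℝ)^N)^(N - m + 1) * ε)
          ≤ (d:ℝ) * (2^N * (((4:ℝ)^N)^d * ε)) := by
        have hcard : (Finset.Ioc n N).card = d := by rw [Nat.card_Ioc]; omega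
        calc ∑ m ∈ Finset.Ioc n N, (m.choose n : ℝ) * (((4:ℝ)^N)^(N - m + 1) * ε)
            ≤ ∑ _m ∈ Finset.Ioc n N, 2^N * (((4:ℝ)^N)^d * ε) := by
              refine Finset.sum_le_sum fun m hm => ?_
              have hm' := Finset.mem_Ioc.1 hm
              refine mul_le_mul (hch m n hm'.2) ?_ (by positivity) (by positivity)
              exact mul_le_mul_of_nonneg_right
                (pow_le_pow_right₀ hK1 (by omega)) hε
          _ = (d:ℝ) * (2^N * (((4:ℝ)^N)^d * ε)) := by
              rw [Finset.sum_const, hcard, nsmul_eq_mul]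
      calc (N.choose n : ℝ) * ε
            + ∑ m ∈ Finset.Ioc n N, (m.choose n : ℝ) * (((4:ℝ)^N)^(N - m + 1) * ε)
          ≤ 2^N * (((4:ℝ)^N)^d * ε) + (d:ℝ) * (2^N * (((4:ℝ)^N)^d * ε)) :=
            add_le_add e1 e2
        _ = ((1:ℝ) + d) * (2^N * (((4:ℝ)^N)^d * ε)) := by ring
        _ ≤ 2^N * (2^N * (((4:ℝ)^N)^d * ε)) := by
            refine mul_le_mul_of_nonneg_right ?_ (by positivity)
            have : ((d:ℝ) + 1) ≤ (N:ℝ) + 1 := by exact_mod_cast Nat.succ_le_succ hd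
            linarith [hN2]
        _ = (2^N * 2^N) * (((4:ℝ)^N)^d * ε) := by ring
        _ = ((4:ℝ)^N)^(d+1) * ε := by rw [h44, pow_succ]; ring
  -- conclude
  refine ⟨fun n => if n ≤ N then ((4:ℝ)^N)^(N - n + 1) * ε else 0, ?_, ?_⟩
  · intro n
    by_cases hn : n ≤ N
    · simp only [if_pos hn]
      exact key (N - n) n (by omega)
    · simp only [if_neg hn]
      rw [h0 n (by omega)]
      exact tnle_zero
  · calc ∑ n ∈ Finset.range (N + 1), (if n ≤ N then ((4:ℝ)^N)^(N - n + 1) * ε else 0)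
        = ∑ n ∈ Finset.range (N + 1), ((4:ℝ)^N)^(N - n + 1) * ε := by
          refine Finset.sum_congr rfl fun n hn => ?_
          have h' : n ≤ N := Nat.lt_succ_iff.1 (Finset.mem_range.1 hn)
          rw [if_pos h']
      _ ≤ ∑ _n ∈ Finset.range (N + 1), ((4:ℝ)^N)^(N+1) * ε := by
          refine Finset.sum_le_sum fun n _ => ?_
          exact mul_le_mul_of_nonneg_right (pow_le_pow_right₀ hK1 (by omega)) hε
      _ = ((N:ℝ) + 1) * (((4:ℝ)^N)^(N+1) * ε) := by
          rw [Finset.sum_const, Finset.card_range, nsmul_eq_mul]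
          push_cast; ring
      _ ≤ ((N + 1) * ((4:ℝ)^N)^(N+1) + 1) * ε := by nlinarith [hε]
end
end

section
/- A state Γ = G_0 ⊕ ⋯ ⊕ G_N on the truncated Fock space 𝓕^{≤N}(𝓗) is uniquely determined by its family of reduced density matrices Γ^{(n)}, 0 ≤ n ≤ N; explicitly, G_n = Γ^{(n)} + Σ_{j=1}^{N−n} (−1)^j C(n+j, n) Tr_{n+1,…,n+j} Γ^{(n+j)}. -/
open scoped InnerProductSpace
open Filter

noncomputable section

universe u

section Defs

variable {E : Type u} [NormedAddCommGroup E] [InnerProductSpace ℂ E] [CompleteSpace E]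

/-- `A` is trace class. -/
def IsTrCl (A : E →L[ℂ] E) : Prop := ∃ C : ℝ, TraceNormLE A C

end Defs

-- auxiliary combinatorial identity
theorem key_alt (n m : ℕ) (h : n ≤ m) :
    (∑ j ∈ Finset.range (m - n + 1),
      ((-1 : ℂ) ^ j * ((n + j).choose n) * (m.choose (n + j)))) =
    if m = n then 1 else 0 := by
  have hch : ∀ j ∈ Finset.range (m - n + 1),
      ((-1 : ℂ) ^ j * ((n + j).choose n) * (m.choose (n + j))) =
      (m.choose n : ℂ) * ((-1 : ℂ) ^ j * ((m - n).choose j)) := by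
    intro j hj
    rw [Finset.mem_range] at hj
    have hjm : n + j ≤ m := by omega
    have := Nat.choose_mul (n := m) (k := n + j) (s := n) (Nat.le_add_right n j)
    have h2 : (m.choose (n + j) * (n + j).choose n : ℂ) =
        (m.choose n * (m - n).choose j : ℂ) := by
      have : m.choose (n + j) * (n + j).choose n = m.choose n * (m - n).choose j := by
        simpa using this
      exact_mod_cast congrArg (Nat.cast : ℕ → ℂ) this
    calc (-1:ℂ)^j * ((n + j).choose n) * (m.choose (n + j))
        = (-1:ℂ)^j * ((m.choose (n+j) : ℂ) * ((n + j).choose n)) := by ring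
      _ = (-1:ℂ)^j * ((m.choose n : ℂ) * ((m - n).choose j)) := by rw [h2]
      _ = (m.choose n : ℂ) * ((-1 : ℂ) ^ j * ((m - n).choose j)) := by ring
  rw [Finset.sum_congr rfl hch, ← Finset.mul_sum]
  have halt : (∑ j ∈ Finset.range (m - n + 1), ((-1 : ℂ) ^ j * ((m - n).choose j))) =
      if m - n = 0 then 1 else 0 := by
    have := Int.alternating_sum_range_choose (n := m - n)
    exact_mod_cast congrArg (Int.cast : ℤ → ℂ) this
  rw [halt]
  rcases eq_or_lt_of_le h with rfl | hlt
  · simp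
  · have h1 : m - n ≠ 0 := by omega
    have h2 : m ≠ n := by omega
    simp [h1, h2]

/-- **Reconstruction of a truncated Fock space state from its reduced density
matrices.** A trace-class block operator `Γ = G_0 ⊕ ⋯ ⊕ G_N` on `𝓕^{≤N}(𝓗)` is uniquely
determined by its reduced density matrices `Γ^{(n)}`, with the explicit inversion formula
`G_n = Γ^{(n)} + ∑_{j=1}^{N−n} (−1)^j C(n+j,n) Tr_{n+1,…,n+j} Γ^{(n+j)}`. -/
theorem state_determined_by_reduced_density_matrices
    {H : Type u} [NormedAddCommGroup H] [InnerProductSpace ℂ H] [CompleteSpace H]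
    {Hn : ℕ → Type u} [∀ n, NormedAddCommGroup (Hn n)]
    [∀ n, InnerProductSpace ℂ (Hn n)] [∀ n, CompleteSpace (Hn n)]
    (tp : ∀ n, Hn n → H → Hn (n + 1))
    (htp_inner : ∀ n (x y : Hn n) (f g : H),
      ⟪tp n x f, tp n y g⟫_ℂ = ⟪x, y⟫_ℂ * ⟪f, g⟫_ℂ)
    (htp_linL : ∀ n (f : H), IsLinearMap ℂ (fun x : Hn n => tp n x f))
    (htp_linR : ∀ n (x : Hn n), IsLinearMap ℂ (tp n x))
    (htp_dense : ∀ n, (Submodule.span ℂ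
      (Set.range fun p : Hn n × H => tp n p.1 p.2)).topologicalClosure = ⊤)
    (ptr : ∀ m n : ℕ, (Hn m →L[ℂ] Hn m) → (Hn n →L[ℂ] Hn n))
    (hptr_lin : ∀ m n, IsLinearMap ℂ (ptr m n))
    (hptr_id : ∀ n G, ptr n n G = G)
    (hptr_step : ∀ n (G : Hn (n + 1) →L[ℂ] Hn (n + 1)) (x y : Hn n)
      (ι : Type u) (e : HilbertBasis ι ℂ H),
      HasSum (fun i => ⟪tp n x (e i), G (tp n y (e i))⟫_ℂ) ⟪x, ptr (n + 1) n G y⟫_ℂ)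
    (hptr_comp : ∀ m n : ℕ, n ≤ m → ∀ (G : Hn (m + 1) →L[ℂ] Hn (m + 1)),
      ptr (m + 1) n G = ptr m n (ptr (m + 1) m G))
    (N : ℕ)
    (G : ∀ n, Hn n →L[ℂ] Hn n)
    (hGtc : ∀ n, IsTrCl (G n))
    (hGsupp : ∀ n, N < n → G n = 0) :
    -- explicit inversion formula
    (∀ n, n ≤ N → G n = rdm ptr N G n +
      ∑ j ∈ Finset.Icc 1 (N - n), (((-1 : ℂ) ^ j) * ((n + j).choose n : ℂ)) •
        ptr (n + j) n (rdm ptr N G (n + j))) ∧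
    -- uniqueness: any trace-class block operator with the same reduced density
    -- matrices coincides with `G`
    (∀ G' : ∀ n, Hn n →L[ℂ] Hn n, (∀ n, IsTrCl (G' n)) → (∀ n, N < n → G' n = 0) →
      (∀ n, n ≤ N → rdm ptr N G n = rdm ptr N G' n) → ∀ n, G n = G' n) := by
  classical
  -- composition of partial traces
  have hcomp : ∀ (k n : ℕ), n ≤ k → ∀ m, k ≤ m → ∀ A : Hn m →L[ℂ] Hn m,
      ptr k n (ptr m k A) = ptr m n A := by
    intro k n hnk m hkm
    induction m, hkm using Nat.le_induction with
    | base => intro A; rw [hptr_id]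
    | succ m hkm ih =>
      intro A
      rw [hptr_comp m k hkm A, ih, ← hptr_comp m n (le_trans hnk hkm)]
  -- the inversion formula, for an arbitrary block operator
  have hmain : ∀ (G : ∀ n, Hn n →L[ℂ] Hn n) (n : ℕ), n ≤ N →
      G n = rdm ptr N G n +
        ∑ j ∈ Finset.Icc 1 (N - n), (((-1 : ℂ) ^ j) * ((n + j).choose n : ℂ)) •
          ptr (n + j) n (rdm ptr N G (n + j)) := by
    intro G n hn
    set F : ℕ → (Hn n →L[ℂ] Hn n) := fun j =>
      (((-1 : ℂ) ^ j) * ((n + j).choose n : ℂ)) • ptr (n + j) n (rdm ptr N G (n + j)) with hF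
    have hF0 : F 0 = rdm ptr N G n := by simp [hF, hptr_id]
    have hsplit : ∑ j ∈ Finset.range (N - n + 1), F j
        = rdm ptr N G n + ∑ j ∈ Finset.Icc 1 (N - n), F j := by
      rw [Finset.sum_range_succ']
      have hIcc : ∑ j ∈ Finset.Icc 1 (N - n), F j
          = ∑ i ∈ Finset.range (N - n), F (i + 1) := by
        rw [← Finset.Ico_add_one_right_eq_Icc, Finset.sum_Ico_eq_sum_range]
        simp [add_comm]
      rw [hIcc, hF0, add_comm]
    rw [← hsplit]
    -- expand each term
    have hFj : ∀ j, F j = ∑ m ∈ Finset.Icc (n + j) N,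
        ((-1 : ℂ) ^ j * ((n + j).choose n) * (m.choose (n + j))) • ptr m n (G m) := by
      intro j
      have hlin := hptr_lin (n + j) n
      let L : (Hn (n + j) →L[ℂ] Hn (n + j)) →ₗ[ℂ] (Hn n →L[ℂ] Hn n) :=
        IsLinearMap.mk' (ptr (n + j) n) hlin
      have hLdef : ∀ A, ptr (n + j) n A = L A := fun A => rfl
      rw [hF]
      unfold rdm
      beta_reduce
      rw [hLdef, map_sum]
      rw [Finset.smul_sum]
      refine Finset.sum_congr rfl fun m hm => ?_
      rw [Finset.mem_Icc] at hm
      rw [map_smul, ← hLdef, hcomp (n + j) n (Nat.le_add_right n j) m hm.1,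
        smul_smul, mul_assoc]
    have hstep1 : ∑ m ∈ Finset.Icc n N, (if m = n then (1 : ℂ) else 0) • ptr m n (G m)
        = G n := by
      have hite : ∀ m ∈ Finset.Icc n N, (if m = n then (1 : ℂ) else 0) • ptr m n (G m)
          = if m = n then ptr m n (G m) else 0 := by
        intro m _; split_ifs <;> simp
      rw [Finset.sum_congr rfl hite,
        Finset.sum_ite_eq' (Finset.Icc n N) n (fun m => ptr m n (G m)),
        if_pos (Finset.mem_Icc.mpr ⟨le_refl n, hn⟩), hptr_id]
    calc G n = ∑ m ∈ Finset.Icc n N,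
        (if m = n then (1 : ℂ) else 0) • ptr m n (G m) := hstep1.symm
      _ = ∑ m ∈ Finset.Icc n N, ∑ j ∈ Finset.range (m - n + 1),
            ((-1 : ℂ) ^ j * ((n + j).choose n) * (m.choose (n + j))) • ptr m n (G m) := by
          refine Finset.sum_congr rfl fun m hm => ?_
          rw [Finset.mem_Icc] at hm
          rw [← Finset.sum_smul, key_alt n m hm.1]
      _ = ∑ j ∈ Finset.range (N - n + 1), ∑ m ∈ Finset.Icc (n + j) N,
            ((-1 : ℂ) ^ j * ((n + j).choose n) * (m.choose (n + j))) • ptr m n (G m) := by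
          refine (Finset.sum_comm' ?_).symm
          intro j m
          simp only [Finset.mem_range, Finset.mem_Icc]
          omega
      _ = ∑ j ∈ Finset.range (N - n + 1), F j := by
          exact Finset.sum_congr rfl fun j _ => (hFj j).symm
  refine ⟨hmain G, ?_⟩
  intro G' hG'tc hG'supp hrdm n
  by_cases hn : n ≤ N
  · rw [hmain G n hn, hmain G' n hn, hrdm n hn]
    refine congrArg _ (Finset.sum_congr rfl fun j hj => ?_)
    rw [Finset.mem_Icc] at hj
    rw [hrdm (n + j) (by omega)]
  · rw [hGsupp n (by omega), hG'supp n (by omega)]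
end
end

section
/- Let A and B be Hilbert–Schmidt operators on L²(ℝ^d) and L²(V) respectively, where V = {(x₁,x₂) ∈ ℝ^{2d} : x₁ + x₂ = 0} is parametrized by v = x₁ − x₂. Then the operator C = (A ⊗ 1)(B ⊗_V 1) on L²(ℝ^{2d}), acting as (Cψ)(x₁,x₂) = ∫ a(x₁,x') b(x'−x₂, x'−y') ψ(x',y') dx'dy', is Hilbert–Schmidt, where a, b are the integral kernels of A, B. -/
open MeasureTheory

noncomputable section

section aux

variable {d : ℕ}

local notation "X" => (Fin d → ℝ)

/-- The coordinate shuffle `((x₁,x₂),(x',y')) ↦ ((x₁,x'),(x₂,y'))` is measure preserving. -/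
lemma measurePreserving_shuffle :
    MeasurePreserving
      (fun q : (X × X) × (X × X) => ((q.1.1, q.2.1), (q.1.2, q.2.2)))
      (volume : Measure ((X × X) × (X × X))) volume := by
  have h1 : MeasurePreserving (MeasurableEquiv.prodAssoc : (X × X) × (X × X) ≃ᵐ X × (X × (X × X)))
      volume volume := volume_preserving_prodAssoc
  have h2a : MeasurePreserving
      ((MeasurableEquiv.prodAssoc : (X × X) × X ≃ᵐ X × (X × X)).symm) volume volume :=
    volume_preserving_prodAssoc.symm _
  have h2b : MeasurePreserving (Prod.map (Prod.swap : X × X → X × X) (id : X → X))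
      (volume : Measure ((X × X) × X)) volume :=
    Measure.measurePreserving_swap.prod (MeasurePreserving.id _)
  have h2c : MeasurePreserving (MeasurableEquiv.prodAssoc : (X × X) × X ≃ᵐ X × (X × X))
      volume volume := volume_preserving_prodAssoc
  have h2 : MeasurePreserving
      (fun p : X × (X × X) => ((p.2.1 : X), ((p.1 : X), p.2.2)))
      (volume : Measure (X × (X × X))) volume := by
    have := (h2c.comp h2b).comp h2a
    convert this using 1
    rfl
  have h3 : MeasurePreserving
      (Prod.map (id : X → X) (fun p : X × (X × X) => ((p.2.1 : X), ((p.1 : X), p.2.2))))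
      (volume : Measure (X × (X × (X × X)))) volume :=
    (MeasurePreserving.id _).prod h2
  have h4 : MeasurePreserving
      ((MeasurableEquiv.prodAssoc : (X × X) × (X × X) ≃ᵐ X × (X × (X × X))).symm)
      volume volume := volume_preserving_prodAssoc.symm _
  have := (h4.comp h3).comp h1
  convert this using 1
  rfl

/-- The map `((x₁,x'),(x₂,y')) ↦ ((x₁,x'),(x'−x₂,x'−y'))` is measure preserving. -/
lemma measurePreserving_skew :
    MeasurePreserving
      (fun q : (X × X) × (X × X) => (q.1, ((q.1.2 - q.2.1 : X), (q.1.2 - q.2.2 : X))))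
      (volume : Measure ((X × X) × (X × X))) volume := by
  have h : MeasurePreserving
      (fun q : (X × X) × (X × X) =>
        ((id q.1 : X × X), ((fun p : X × X => fun c : X × X => ((p.2 - c.1 : X), (p.2 - c.2 : X)))
          q.1 q.2)))
      ((volume : Measure (X × X)).prod (volume : Measure (X × X)))
      ((volume : Measure (X × X)).prod (volume : Measure (X × X))) := by
    refine MeasurePreserving.skew_product (g := fun p c : X × X => ((p.2 - c.1 : X), (p.2 - c.2 : X))) (μb := (volume : Measure (X × X))) (μc := (volume : Measure (X × X))) (μd := (volume : Measure (X × X))) (MeasurePreserving.id _) ?_ ?_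
    · apply Measurable.prod
      · exact (measurable_snd.comp measurable_fst).sub (measurable_fst.comp measurable_snd)
      · exact (measurable_snd.comp measurable_fst).sub (measurable_snd.comp measurable_snd)
    · refine Filter.Eventually.of_forall fun p => ?_
      have : MeasurePreserving
          (fun c : X × X => ((p.2 - c.1 : X), (p.2 - c.2 : X)))
          ((volume : Measure X).prod (volume : Measure X))
          ((volume : Measure X).prod (volume : Measure X)) :=
        (Measure.measurePreserving_sub_left volume p.2).prod (Measure.measurePreserving_sub_left volume p.2)
      simpa [← Measure.volume_eq_prod] using this.map_eq
  simpa [← Measure.volume_eq_prod] using h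

end aux

/-- **Hilbert–Schmidt property of `(A ⊗ 1)(B ⊗_V 1)`.**  Let `A` and `B` be
Hilbert–Schmidt operators on `L²(ℝ^d)` and `L²(V)` (with `V = {x₁ + x₂ = 0} ≅ ℝ^d`
parametrized by `v = x₁ − x₂`), given by square-integrable kernels `a(x, x')` and
`b(v, v')`.  Then the operator `C = (A ⊗ 1)(B ⊗_V 1)` on `L²(ℝ^{2d})`, which acts as
`(Cψ)(x₁,x₂) = ∫ a(x₁,x') b(x'−x₂, x'−y') ψ(x',y') dx' dy'`, is an integral operator
with kernel in `L²(ℝ^{4d})`, hence Hilbert–Schmidt. -/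
theorem hilbertSchmidt_comp_kernel (d : ℕ)
    (a b : ((Fin d → ℝ) × (Fin d → ℝ)) → ℂ)
    (ha : MemLp a 2 (volume : Measure ((Fin d → ℝ) × (Fin d → ℝ))))
    (hb : MemLp b 2 (volume : Measure ((Fin d → ℝ) × (Fin d → ℝ)))) :
    MemLp (fun q : ((Fin d → ℝ) × (Fin d → ℝ)) × ((Fin d → ℝ) × (Fin d → ℝ)) =>
        a (q.1.1, q.2.1) * b (q.2.1 - q.1.2, q.2.1 - q.2.2)) 2
      (volume : Measure (((Fin d → ℝ) × (Fin d → ℝ)) × ((Fin d → ℝ) × (Fin d → ℝ)))) := by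
  -- the "product" kernel `g(p₁, p₂) = a p₁ * b p₂` is in `L²`
  have hg : MemLp (fun p : ((Fin d → ℝ) × (Fin d → ℝ)) × ((Fin d → ℝ) × (Fin d → ℝ)) => a p.1 * b p.2) 2 volume := by
    have hmeas : AEStronglyMeasurable (fun p : ((Fin d → ℝ) × (Fin d → ℝ)) × ((Fin d → ℝ) × (Fin d → ℝ)) => a p.1 * b p.2) volume := by
      rw [Measure.volume_eq_prod]
      exact ha.1.comp_fst.mul hb.1.comp_snd
    rw [memLp_two_iff_integrable_sq_norm hmeas]
    have ha2 : Integrable (fun x : (Fin d → ℝ) × (Fin d → ℝ) => ‖a x‖ ^ 2) volume :=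
      (memLp_two_iff_integrable_sq_norm ha.1).1 ha
    have hb2 : Integrable (fun x : (Fin d → ℝ) × (Fin d → ℝ) => ‖b x‖ ^ 2) volume :=
      (memLp_two_iff_integrable_sq_norm hb.1).1 hb
    have := ha2.mul_prod hb2
    rw [← Measure.volume_eq_prod] at this
    simpa [norm_mul, mul_pow] using this
  -- the substitution map is measure preserving
  have hΦ : MeasurePreserving
      (fun q : ((Fin d → ℝ) × (Fin d → ℝ)) × ((Fin d → ℝ) × (Fin d → ℝ)) =>
        ((q.1.1, q.2.1), (q.2.1 - q.1.2, q.2.1 - q.2.2)))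
      (volume : Measure (((Fin d → ℝ) × (Fin d → ℝ)) × ((Fin d → ℝ) × (Fin d → ℝ)))) volume := by
    have := measurePreserving_skew.comp (measurePreserving_shuffle (d := d))
    convert this using 1
    rfl
  exact hg.comp_measurePreserving hΦ
end
end
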